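/- Let X be a smooth normed space. Then the map [x, y] := ‖y‖ · φ_y(x), where φ_y is the unique support functional at y (and [x, 0] := 0), is the unique semi-inner product on X compatible with the norm, i.e., it satisfies additivity and homogeneity in the first variable, conjugate homogeneity in the second variable, [x,x] > 0 for x ≠ 0, the Cauchy–Schwarz inequality |[x,y]| ≤ [x,x]^{1/2}[y,y]^{1/2}, and [x,x]^{1/2} = ‖x‖. -/

import Mathlib

open RCLike

/-- A support functional at `x`: a norm-one continuous linear functional with `φ x = ‖x‖`. -/
def SuppFunc (𝕜 : Type*) [RCLike 𝕜] {X : Type*} [NormedAddCommGroup X] [NormedSpace 𝕜 X]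
    (x : X) (φ : X →L[𝕜] 𝕜) : Prop :=
  ‖φ‖ = 1 ∧ φ x = (‖x‖ : 𝕜)

/-- `X` is smooth at `x` if there is a unique support functional at `x`. -/
def NormSmoothAt (𝕜 : Type*) [RCLike 𝕜] {X : Type*} [NormedAddCommGroup X] [NormedSpace 𝕜 X]
    (x : X) : Prop := ∃! φ : X →L[𝕜] 𝕜, SuppFunc 𝕜 x φ

/-- `X` is smooth if it is smooth at every nonzero point. -/
def NormSmooth (𝕜 : Type*) (X : Type*) [RCLike 𝕜] [NormedAddCommGroup X] [NormedSpace 𝕜 X] :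
    Prop := ∀ x : X, x ≠ 0 → NormSmoothAt 𝕜 x

/-- `sip` is the canonical semi-inner product `[u,v] = ‖v‖ * φ_v u` built from support
functionals (on a smooth space this pins `sip` down uniquely). -/
def IsCompatSIP (𝕜 : Type*) {X : Type*} [RCLike 𝕜] [NormedAddCommGroup X] [NormedSpace 𝕜 X]
    (sip : X → X → 𝕜) : Prop :=
  (∀ u : X, sip u 0 = 0) ∧
  ∀ (u v : X) (φ : X →L[𝕜] 𝕜), SuppFunc 𝕜 v φ → sip u v = (‖v‖ : 𝕜) * φ u

/-- Birkhoff–James orthogonality: `x ⊥ y` iff `‖x + a • y‖ ≥ ‖x‖` for all scalars. -/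
def BJOrth (𝕜 : Type*) {X : Type*} [RCLike 𝕜] [NormedAddCommGroup X] [NormedSpace 𝕜 X]
    (x y : X) : Prop := ∀ a : 𝕜, ‖x‖ ≤ ‖x + a • y‖

/-- A semi-inner product compatible with the norm: additive and homogeneous in the first
variable, conjugate-homogeneous in the second, positive definite, Cauchy–Schwarz, and
`[x,x] = ‖x‖²`. -/
def IsSIP (𝕜 : Type*) {X : Type*} [RCLike 𝕜] [NormedAddCommGroup X] [NormedSpace 𝕜 X]
    (sip : X → X → 𝕜) : Prop :=
  (∀ x y z : X, sip (x + y) z = sip x z + sip y z) ∧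
  (∀ (a : 𝕜) (x y : X), sip (a • x) y = a * sip x y) ∧
  (∀ (a : 𝕜) (x y : X), sip x (a • y) = (starRingEnd 𝕜) a * sip x y) ∧
  (∀ x : X, x ≠ 0 → 0 < re (sip x x) ∧ im (sip x x) = 0) ∧
  (∀ x y : X, ‖sip x y‖ ≤ Real.sqrt (re (sip x x)) * Real.sqrt (re (sip y y))) ∧
  (∀ x : X, sip x x = (‖x‖ : 𝕜) ^ 2)

theorem stmt1 {𝕜 : Type*} [RCLike 𝕜] {X : Type*} [NormedAddCommGroup X] [NormedSpace 𝕜 X]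
    (hsm : NormSmooth 𝕜 X) (sip : X → X → 𝕜) (hsip : IsCompatSIP 𝕜 sip) :
    IsSIP 𝕜 sip ∧ ∀ sip' : X → X → 𝕜, IsSIP 𝕜 sip' → sip' = sip := by

  obtain ⟨h0, hc⟩ := hsip
  have key : ∀ v : X, v ≠ 0 → ∃ φ : X →L[𝕜] 𝕜, SuppFunc 𝕜 v φ := by
    intro v hv
    obtain ⟨g, hg1, hg2⟩ := exists_dual_vector 𝕜 v (norm_ne_zero_iff.mpr hv)
    exact ⟨g, hg1, hg2⟩
  have hxx : ∀ x : X, sip x x = (‖x‖ : 𝕜) ^ 2 := by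
    intro x
    by_cases hx : x = 0
    · simp [hx, h0]
    · obtain ⟨φ, hφ⟩ := key x hx
      rw [hc x x φ hφ, hφ.2]; ring
  have hCS : ∀ x y : X, ‖sip x y‖ ≤ ‖x‖ * ‖y‖ := by
    intro x y
    by_cases hy : y = 0
    · simp [hy, h0]
    · obtain ⟨φ, hφ⟩ := key y hy
      rw [hc x y φ hφ]
      calc ‖(‖y‖ : 𝕜) * φ x‖ = ‖y‖ * ‖φ x‖ := by
            rw [norm_mul, RCLike.norm_ofReal, abs_of_nonneg (norm_nonneg y)]
        _ ≤ ‖y‖ * (‖φ‖ * ‖x‖) := by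
            gcongr; exact φ.le_opNorm x
        _ = ‖x‖ * ‖y‖ := by rw [hφ.1]; ring
  have hcast : ∀ r : ℝ, ((r : 𝕜) ^ 2) = ((r ^ 2 : ℝ) : 𝕜) := by
    intro r; push_cast; ring
  have hre : ∀ x : X, re (sip x x) = ‖x‖ ^ 2 := by
    intro x
    rw [hxx x, hcast, RCLike.ofReal_re]
  constructor
  · refine ⟨?_, ?_, ?_, ?_, ?_, hxx⟩
    · intro x y z
      by_cases hz : z = 0
      · simp [hz, h0]
      · obtain ⟨φ, hφ⟩ := key z hz
        rw [hc x z φ hφ, hc y z φ hφ, hc (x + y) z φ hφ, map_add]; ring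
    · intro a x y
      by_cases hy : y = 0
      · simp [hy, h0]
      · obtain ⟨φ, hφ⟩ := key y hy
        rw [hc x y φ hφ, hc (a • x) y φ hφ, map_smul, smul_eq_mul]; ring
    · intro a x y
      by_cases hy : y = 0
      · simp [hy, h0]
      · by_cases ha : a = 0
        · simp [ha, h0]
        · obtain ⟨φ, hφ⟩ := key y hy
          have hay : a • y ≠ 0 := smul_ne_zero ha hy
          set c : 𝕜 := (starRingEnd 𝕜) a / (‖a‖ : 𝕜) with hcdef
          have hcn : ‖c‖ = 1 := by
            rw [hcdef, norm_div, RCLike.norm_conj, RCLike.norm_ofReal,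
              abs_of_nonneg (norm_nonneg a), div_self (norm_ne_zero_iff.mpr ha)]
          have hne : (‖a‖ : 𝕜) ≠ 0 := by
            simpa using norm_ne_zero_iff.mpr ha
          have hψ : SuppFunc 𝕜 (a • y) (c • φ) := by
            constructor
            · rw [show ‖c • φ‖ = ‖c‖ * ‖φ‖ from norm_smul c φ, hcn, hφ.1, one_mul]
            · have h1 : (c • φ) (a • y) = c * (a * φ y) := by
                simp only [ContinuousLinearMap.smul_apply, map_smul, smul_eq_mul]
                ring
              rw [h1, hφ.2, hcdef, norm_smul, div_mul_eq_mul_div,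
                div_eq_iff hne, ← mul_assoc, RCLike.conj_mul]
              push_cast
              ring
          rw [hc x (a • y) (c • φ) hψ, hc x y φ hφ]
          have h2 : ((c • φ) x : 𝕜) = c * φ x := by
            simp only [ContinuousLinearMap.smul_apply, smul_eq_mul]
          rw [h2, hcdef, norm_smul]
          push_cast
          field_simp
    · intro x hx
      have hnx : (0 : ℝ) < ‖x‖ := norm_pos_iff.mpr hx
      constructor
      · rw [hre x]; positivity
      · rw [hxx x, hcast, RCLike.ofReal_im]
    · intro x y
      rw [hre x, hre y, Real.sqrt_sq (norm_nonneg x), Real.sqrt_sq (norm_nonneg y)]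
      exact hCS x y
  · intro sip' hsip'
    obtain ⟨hadd', hsmul', hconj', hpos', hCS', hxx'⟩ := hsip'
    have hcast : ∀ r : ℝ, ((r : 𝕜) ^ 2) = ((r ^ 2 : ℝ) : 𝕜) := by
      intro r; push_cast; ring
    have hre' : ∀ x : X, re (sip' x x) = ‖x‖ ^ 2 := by
      intro x
      rw [hxx' x, hcast, RCLike.ofReal_re]
    have hCSn : ∀ u w : X, ‖sip' u w‖ ≤ ‖u‖ * ‖w‖ := by
      intro u w
      have := hCS' u w
      rwa [hre' u, hre' w, Real.sqrt_sq (norm_nonneg u),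
        Real.sqrt_sq (norm_nonneg w)] at this
    funext u v
    by_cases hv : v = 0
    · have : sip' u (0 : X) = 0 := by
        have := hconj' 0 u 0
        simpa using this
      rw [hv, this, h0]
    · have hnv : (0 : ℝ) < ‖v‖ := norm_pos_iff.mpr hv
      have hnvk : (‖v‖ : 𝕜) ≠ 0 := by
        simpa using norm_ne_zero_iff.mpr hv
      set f : X →ₗ[𝕜] 𝕜 :=
        { toFun := fun u => (‖v‖ : 𝕜)⁻¹ * sip' u v
          map_add' := fun x y => by rw [hadd']; ring
          map_smul' := fun a x => by
            rw [hsmul']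
            simp only [RingHom.id_apply, smul_eq_mul]
            ring } with hf
      have hfb : ∀ x : X, ‖f x‖ ≤ 1 * ‖x‖ := by
        intro x
        have h1 : ‖f x‖ = ‖v‖⁻¹ * ‖sip' x v‖ := by
          show ‖(‖v‖ : 𝕜)⁻¹ * sip' x v‖ = _
          rw [norm_mul, norm_inv, RCLike.norm_ofReal, abs_of_nonneg (norm_nonneg v)]
        rw [h1, one_mul, inv_mul_le_iff₀ hnv, mul_comm]
        exact hCSn x v
      set φ := f.mkContinuous 1 hfb with hφdef
      have hφv : φ v = (‖v‖ : 𝕜) := by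
        show (‖v‖ : 𝕜)⁻¹ * sip' v v = (‖v‖ : 𝕜)
        rw [hxx' v, sq, ← mul_assoc, inv_mul_cancel₀ hnvk, one_mul]
      have hsupp : SuppFunc 𝕜 v φ := by
        constructor
        · refine le_antisymm (f.mkContinuous_norm_le one_pos.le hfb) ?_
          have h2 : ‖φ v‖ ≤ ‖φ‖ * ‖v‖ := φ.le_opNorm v
          rw [hφv, RCLike.norm_ofReal, abs_of_nonneg (norm_nonneg v)] at h2
          nlinarith
        · exact hφv
      rw [hc u v φ hsupp]
      show sip' u v = (‖v‖ : 𝕜) * ((‖v‖ : 𝕜)⁻¹ * sip' u v)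
      rw [← mul_assoc, mul_inv_cancel₀ hnvk, one_mul]
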